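/- Under the hypotheses of the previous statement (u continuous, u(0)=0, periodic increments with period T, u(T) < 0), the unique periodic trajectory z satisfies z(t₀) = 0 for some t₀ ∈ [0, T]; that is, the queue empties at least once per cycle. -/

import Mathlib

open Set

/-- The Skorokhod regulator map. -/
noncomputable def psi (u : ℝ → ℝ) (t : ℝ) : ℝ :=
  sSup ((fun s => max (-u s) 0) '' Icc 0 t)

/-- The periodic trajectory of a stable single queue under periodic fixed-time
control empties at least once per cycle. -/
theorem periodic_orbit_clears
    (u : ℝ → ℝ) (T : ℝ) (hT : 0 < T)
    (hu : Continuous u) (hu0 : u 0 = 0)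
    (hper : ∀ t, u (t + T) - u t = u T) (hneg : u T < 0)
    (z₀ : ℝ) (hz₀ : 0 ≤ z₀)
    (z : ℝ → ℝ)
    (hz : ∀ t, z t = z₀ + u t + psi (fun s => z₀ + u s) t)
    (hzper : ∀ t, 0 ≤ t → z (t + T) = z t) :
    ∃ t₀ ∈ Icc 0 T, z t₀ = 0 := by
  set f : ℝ → ℝ := fun s => max (-(z₀ + u s)) 0 with hf
  have hfc : Continuous f := by
    apply Continuous.max _ continuous_const
    exact (continuous_const.add hu).neg
  have hf0 : f 0 = 0 := by
    simp [hf, hu0, neg_nonpos.2 hz₀, max_eq_right]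
  -- z 0 = z₀
  have hz0 : z 0 = z₀ := by
    have hp0 : psi (fun s => z₀ + u s) 0 = 0 := by
      unfold psi
      rw [Icc_self, image_singleton, csSup_singleton]
      exact hf0
    rw [hz 0, hu0, hp0]; ring
  -- z T = z 0
  have hzT : z T = z₀ := by
    have := hzper 0 le_rfl
    rw [zero_add] at this
    rw [this, hz0]
  -- psi at T equals -u T
  have hpsiT : psi (fun s => z₀ + u s) T = -u T := by
    have := hz T
    rw [hzT] at this
    linarith
  -- f attains its sup on [0,T]
  have hcomp : IsCompact (Icc (0:ℝ) T) := isCompact_Icc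
  obtain ⟨t₀, ht₀, hmax⟩ := hcomp.exists_sSup_image_eq ⟨0, left_mem_Icc.2 hT.le⟩
    hfc.continuousOn
  have hsup : sSup (f '' Icc 0 T) = -u T := hpsiT
  have hft₀ : f t₀ = -u T := by rw [← hmax, hsup]
  have hftpos : (0:ℝ) < f t₀ := by rw [hft₀]; linarith
  have hval : -(z₀ + u t₀) = -u T := by
    rcases max_cases (-(z₀ + u t₀)) (0:ℝ) with ⟨h1, _⟩ | ⟨h1, _⟩
    · rw [← h1]; exact hft₀
    · exfalso; rw [hf] at hftpos; simp only at hftpos; rw [h1] at hftpos; exact lt_irrefl 0 hftpos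
  -- psi at t₀ equals -u T
  have hbdd : BddAbove (f '' Icc 0 T) := (hcomp.image hfc).bddAbove
  have hle : psi (fun s => z₀ + u s) t₀ ≤ -u T := by
    unfold psi
    rw [← hsup]
    exact csSup_le_csSup hbdd ⟨f 0, mem_image_of_mem f (left_mem_Icc.2 ht₀.1)⟩
      (image_mono (f := f) (Icc_subset_Icc le_rfl ht₀.2))
  have hge : -u T ≤ psi (fun s => z₀ + u s) t₀ := by
    unfold psi
    rw [← hft₀]
    exact le_csSup (BddAbove.mono (image_mono (f := f) (Icc_subset_Icc le_rfl ht₀.2)) hbdd)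
      (mem_image_of_mem f (right_mem_Icc.2 ht₀.1))
  have hpsit₀ : psi (fun s => z₀ + u s) t₀ = -u T := le_antisymm hle hge
  refine ⟨t₀, ht₀, ?_⟩
  rw [hz t₀, hpsit₀]
  linarith
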